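/- Fix a probability space (Ω, 𝓕, 𝖯), an integer q ≥ 0, and a jointly independent family (ζ_j)_{0 ≤ j ≤ q} of standard Gaussian random variables. Then for any real coefficients C : {0,…,q}² → ℝ, the random variable X = Σ_{j_1=0}^{q} Σ_{j_2=0}^{q} C_{j_2 j_1} · (ζ_{j_1} ζ_{j_2} − 1_{j_1=j_2}) satisfies 𝖤[X²] = Σ_{j_1,j_2=0}^{q} C_{j_2 j_1}² + Σ_{j_1,j_2=0}^{q} C_{j_1 j_2} C_{j_2 j_1}. -/

import Mathlib

open MeasureTheory ProbabilityTheory Real Set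
open scoped NNReal ENNReal


lemma ncast (n : ℕ) : (-1:ℝ) < n := neg_one_lt_zero.trans_le (Nat.cast_nonneg n)

lemma intB (n : ℕ) : Integrable (fun x : ℝ => x ^ n * Real.exp (-(1/2) * x ^ 2)) := by
  have := integrable_rpow_mul_exp_neg_mul_sq (b := 1/2) (by norm_num) (s := (n : ℝ)) (ncast n)
  simpa [Real.rpow_natCast] using this

lemma J0 : ∫ x : ℝ, Real.exp (-(1/2) * x ^ 2) = Real.sqrt (2 * π) := by
  rw [integral_gaussian]
  rw [show π / (1/2) = 2 * π by ring]

lemma Jodd (n : ℕ) (hn : Odd n) : ∫ x : ℝ, x ^ n * Real.exp (-(1/2) * x ^ 2) = 0 := by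
  have h := intervalIntegral.integral_Iic_add_Ioi (μ := volume) (b := (0:ℝ))
    (f := fun x => x ^ n * Real.exp (-(1/2) * x ^ 2)) ((intB n).integrableOn) ((intB n).integrableOn)
  have h2 : (∫ x in Iic (0:ℝ), x ^ n * Real.exp (-(1/2) * x ^ 2))
      = - ∫ x in Ioi (0:ℝ), x ^ n * Real.exp (-(1/2) * x ^ 2) := by
    have e1 := integral_comp_neg_Ioi (0:ℝ) (fun x => x ^ n * Real.exp (-(1/2) * x ^ 2))
    rw [neg_zero] at e1
    rw [← e1, ← integral_neg]
    refine setIntegral_congr_fun measurableSet_Ioi (fun x _ => ?_)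
    rw [hn.neg_pow, neg_sq]
    ring
  rw [h2] at h
  linarith [h]

lemma Jeven (n : ℕ) (hn : Even n) : ∫ x : ℝ, x ^ n * Real.exp (-(1/2) * x ^ 2)
    = 2 * ((1/2 : ℝ) ^ (-((n:ℝ) + 1) / 2) * (1 / 2) * Real.Gamma (((n:ℝ) + 1) / 2)) := by
  have habs : ∀ x : ℝ, |x| ^ n * Real.exp (-(1/2) * |x| ^ 2) = x ^ n * Real.exp (-(1/2) * x ^ 2) := by
    intro x
    rw [hn.pow_abs, sq_abs]
  rw [← funext habs, integral_comp_abs (f := fun x => x ^ n * Real.exp (-(1/2) * x ^ 2))]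
  have key := integral_rpow_mul_exp_neg_mul_rpow (p := 2) (q := (n:ℝ)) (b := 1/2)
    (by norm_num) (ncast n) (by norm_num)
  have e : ∫ x in Ioi (0:ℝ), x ^ ((n:ℝ)) * Real.exp (-(1/2) * x ^ (2:ℝ))
      = ∫ x in Ioi (0:ℝ), x ^ n * Real.exp (-(1/2) * x ^ 2) := by
    refine setIntegral_congr_fun measurableSet_Ioi (fun x _ => ?_)
    rw [show ((2:ℝ)) = ((2:ℕ):ℝ) by norm_num, Real.rpow_natCast, Real.rpow_natCast]
  rw [← e, key]


lemma Gamma_three_halves : Real.Gamma (3/2) = Real.sqrt π / 2 := by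
  have : (3/2 : ℝ) = 1/2 + 1 := by norm_num
  rw [this, Real.Gamma_add_one (by norm_num), Real.Gamma_one_half_eq]
  ring

lemma Gamma_five_halves : Real.Gamma (5/2) = 3 * Real.sqrt π / 4 := by
  have : (5/2 : ℝ) = 3/2 + 1 := by norm_num
  rw [this, Real.Gamma_add_one (by norm_num), Gamma_three_halves]
  ring

lemma half_rpow (y : ℝ) : (1/2 : ℝ) ^ (-y) = 2 ^ y := by
  rw [one_div, ← Real.rpow_neg_one 2, ← Real.rpow_mul (by norm_num : (0:ℝ) ≤ 2)]
  norm_num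

lemma two_rpow_three_halves : (2:ℝ) ^ ((3:ℝ)/2) = 2 * Real.sqrt 2 := by
  rw [show ((3:ℝ)/2) = 1 + 1/2 by norm_num, Real.rpow_add (by norm_num), Real.rpow_one,
    ← Real.sqrt_eq_rpow]

lemma two_rpow_five_halves : (2:ℝ) ^ ((5:ℝ)/2) = 4 * Real.sqrt 2 := by
  rw [show ((5:ℝ)/2) = 2 + 1/2 by norm_num, Real.rpow_add (by norm_num),
    ← Real.sqrt_eq_rpow, show ((2:ℝ)^(2:ℝ)) = 4 by norm_num]

lemma J2 : ∫ x : ℝ, x ^ 2 * Real.exp (-(1/2) * x ^ 2) = Real.sqrt (2 * π) := by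
  rw [Jeven 2 (by norm_num)]
  norm_num
  rw [half_rpow, two_rpow_three_halves,
    Gamma_three_halves]
  ring

lemma J4 : ∫ x : ℝ, x ^ 4 * Real.exp (-(1/2) * x ^ 2) = 3 * Real.sqrt (2 * π) := by
  rw [Jeven 4 ⟨2, by norm_num⟩]
  norm_num
  rw [half_rpow, two_rpow_five_halves,
    Gamma_five_halves]
  ring


lemma pdf_eq (x : ℝ) : gaussianPDFReal 0 1 x = (Real.sqrt (2*π))⁻¹ * Real.exp (-(1/2) * x ^ 2) := by
  unfold gaussianPDFReal
  norm_num
  left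
  ring_nf

lemma gr_eq : gaussianReal 0 1 =
    volume.withDensity (fun x => ((Real.toNNReal (gaussianPDFReal 0 1 x) : ℝ≥0) : ℝ≥0∞)) := by
  rw [gaussianReal_of_var_ne_zero 0 one_ne_zero]
  rfl

lemma gauss_integrable (n : ℕ) : Integrable (fun x : ℝ => x ^ n) (gaussianReal 0 1) := by
  rw [gr_eq, integrable_withDensity_iff_integrable_smul
    ((measurable_gaussianPDFReal 0 1).real_toNNReal)]
  have : (fun x : ℝ => Real.toNNReal (gaussianPDFReal 0 1 x) • x ^ n)
      = fun x : ℝ => (Real.sqrt (2*π))⁻¹ * (x ^ n * Real.exp (-(1/2) * x ^ 2)) := by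
    funext x
    rw [NNReal.smul_def, smul_eq_mul, Real.coe_toNNReal _ (gaussianPDFReal_nonneg _ _ _), pdf_eq]
    ring
  rw [this]
  exact (intB n).const_mul _

lemma gauss_moment (n : ℕ) : ∫ x, x ^ n ∂(gaussianReal 0 1)
    = (Real.sqrt (2*π))⁻¹ * ∫ x, x ^ n * Real.exp (-(1/2) * x ^ 2) := by
  rw [gr_eq, integral_withDensity_eq_integral_smul
    ((measurable_gaussianPDFReal 0 1).real_toNNReal)]
  rw [← integral_const_mul]
  congr 1
  funext x
  rw [NNReal.smul_def, smul_eq_mul, Real.coe_toNNReal _ (gaussianPDFReal_nonneg _ _ _), pdf_eq]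
  ring

lemma integral_prod_pow {Ω : Type*} [MeasurableSpace Ω] (P : Measure Ω) [IsProbabilityMeasure P]
    (q : ℕ) (ζ : Fin (q + 1) → Ω → ℝ)
    (hmeas : ∀ j, Measurable (ζ j))
    (hindep : iIndepFun ζ P)
    (m : Fin (q + 1) → ℕ)
    (hint : ∀ i, Integrable (fun ω => ζ i ω ^ m i) P)
    (s : Finset (Fin (q + 1))) :
    Integrable (fun ω => ∏ i ∈ s, ζ i ω ^ m i) P ∧
      ∫ ω, ∏ i ∈ s, ζ i ω ^ m i ∂P = ∏ i ∈ s, ∫ ω, ζ i ω ^ m i ∂P := by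
  classical
  set η : Fin (q + 1) → Ω → ℝ := fun i ω => ζ i ω ^ m i with hη
  have hηmeas : ∀ i, Measurable (η i) := fun i => (hmeas i).pow_const (m i)
  have hηindep : iIndepFun η P :=
    hindep.comp (fun i x => x ^ m i) (fun i => measurable_id.pow_const (m i))
  induction s using Finset.induction_on with
  | empty => simp
  | insert _ _ hi =>
      rename_i i s ih
      have hIF : IndepFun (∏ j ∈ s, η j) (η i) P :=
        hηindep.indepFun_finsetProd_of_notMem hηmeas hi
      have hprod_int : Integrable (∏ j ∈ s, η j) P := by
        have := ih.1
        convert this using 1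
        funext ω
        simp [η]
      have hmul_int : Integrable ((∏ j ∈ s, η j) * η i) P :=
        hIF.integrable_mul hprod_int (hint i)
      constructor
      · have : (fun ω => ∏ j ∈ insert i s, ζ j ω ^ m j)
            = (∏ j ∈ s, η j) * η i := by
          funext ω
          simp [Finset.prod_insert hi, η, mul_comm]
        rw [this]
        exact hmul_int
      · have e1 : (fun ω => ∏ j ∈ insert i s, ζ j ω ^ m j)
            = (∏ j ∈ s, η j) * η i := by
          funext ω
          simp [Finset.prod_insert hi, η, mul_comm]
        rw [show (∫ ω, ∏ i ∈ insert i s, ζ i ω ^ m i ∂P)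
            = ∫ ω, ((∏ j ∈ s, η j) * η i) ω ∂P by rw [← e1]]
        rw [hIF.integral_mul_eq_mul_integral hprod_int.aestronglyMeasurable (hint i).aestronglyMeasurable]
        rw [Finset.prod_insert hi, ← ih.2, mul_comm]
        congr 1
        apply integral_congr_ae
        filter_upwards with ω
        simp [η]

lemma prod_g_eq {ι : Type*} [Fintype ι] [DecidableEq ι] (g : ℕ → ℝ)
    (hg0 : g 0 = 1) (hg1 : g 1 = 0) (hg2 : g 2 = 1) (hg3 : g 3 = 0) (hg4 : g 4 = 3)
    (a b c d : ι) :
    ∏ i, g ((if a = i then 1 else 0) + (if b = i then 1 else 0)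
        + (if c = i then 1 else 0) + (if d = i then 1 else 0))
      = (if a = b then (1:ℝ) else 0) * (if c = d then 1 else 0)
        + (if a = c then (1:ℝ) else 0) * (if b = d then 1 else 0)
        + (if a = d then (1:ℝ) else 0) * (if b = c then 1 else 0) := by
  by_cases hab : a = b <;> by_cases hcd : c = d <;> by_cases hac : a = c <;>
    by_cases hbd : b = d <;> by_cases had : a = d <;> by_cases hbc : b = c <;>
    simp_all <;>
    first
      | (refine Finset.prod_eq_one fun i _ => ?_ ;
         by_cases h1 : a = i <;> by_cases h2 : b = i <;> by_cases h3 : c = i <;>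
           by_cases h4 : d = i <;> simp_all [eq_comm] ; done)
      | (rw [Finset.prod_eq_single a (fun i _ hia => by simp [Ne.symm hia, hg0]) (by simp)] ;
         norm_num [hg4] ; done)
      | (rw [Finset.prod_eq_single b (fun i _ hia => by simp [Ne.symm hia, hg0]) (by simp)] ;
         norm_num [hg4] ; done)
      | (rw [Finset.prod_eq_single c (fun i _ hia => by simp [Ne.symm hia, hg0]) (by simp)] ;
         norm_num [hg4] ; done)
      | (rw [Finset.prod_eq_single d (fun i _ hia => by simp [Ne.symm hia, hg0]) (by simp)] ;
         norm_num [hg4] ; done)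
      | (apply Finset.prod_eq_zero (Finset.mem_univ a) ; simp_all [eq_comm] ; done)
      | (apply Finset.prod_eq_zero (Finset.mem_univ b) ; simp_all [eq_comm] ; done)
      | (apply Finset.prod_eq_zero (Finset.mem_univ c) ; simp_all [eq_comm] ; done)
      | (apply Finset.prod_eq_zero (Finset.mem_univ d) ; simp_all [eq_comm] ; done)

lemma prod_g_eq2 {ι : Type*} [Fintype ι] [DecidableEq ι] (g : ℕ → ℝ)
    (hg0 : g 0 = 1) (hg1 : g 1 = 0) (hg2 : g 2 = 1) (a b : ι) :
    ∏ i, g ((if a = i then 1 else 0) + (if b = i then 1 else 0))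
      = if a = b then (1:ℝ) else 0 := by
  by_cases hab : a = b <;> simp_all <;>
    first
      | (rw [Finset.prod_eq_single b (fun i _ hia => by simp [Ne.symm hia, hg0]) (by simp)] ;
         simp [hg2] ; done)
      | (apply Finset.prod_eq_zero (Finset.mem_univ a) ; simp_all [eq_comm] ; done)

lemma sqrt2pi_ne : Real.sqrt (2 * π) ≠ 0 :=
  ne_of_gt (Real.sqrt_pos.mpr (by positivity))

lemma gmom0 : ∫ x, x ^ 0 ∂(gaussianReal 0 1) = 1 := by
  rw [gauss_moment 0]
  simp only [pow_zero, one_mul]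
  rw [J0, inv_mul_cancel₀ sqrt2pi_ne]

lemma gmom1 : ∫ x, x ^ 1 ∂(gaussianReal 0 1) = 0 := by
  rw [gauss_moment 1, Jodd 1 (by norm_num), mul_zero]

lemma gmom2 : ∫ x, x ^ 2 ∂(gaussianReal 0 1) = 1 := by
  rw [gauss_moment 2, J2, inv_mul_cancel₀ sqrt2pi_ne]

lemma gmom3 : ∫ x, x ^ 3 ∂(gaussianReal 0 1) = 0 := by
  rw [gauss_moment 3, Jodd 3 ⟨1, by norm_num⟩, mul_zero]

lemma gmom4 : ∫ x, x ^ 4 ∂(gaussianReal 0 1) = 3 := by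
  rw [gauss_moment 4, J4]
  rw [show (√(2 * π))⁻¹ * (3 * √(2*π)) = 3 * ((√(2*π))⁻¹ * √(2*π)) by ring,
    inv_mul_cancel₀ sqrt2pi_ne, mul_one]

lemma zeta_int {Ω : Type*} [MeasurableSpace Ω] {P : Measure Ω} {f : Ω → ℝ}
    (hf : Measurable f) (hg : Measure.map f P = gaussianReal 0 1) (n : ℕ) :
    Integrable (fun ω => f ω ^ n) P := by
  have h1 : Integrable (fun x : ℝ => x ^ n) (Measure.map f P) := by
    rw [hg]; exact gauss_integrable n
  exact (integrable_map_measure h1.aestronglyMeasurable hf.aemeasurable).mp h1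

lemma zeta_mom {Ω : Type*} [MeasurableSpace Ω] {P : Measure Ω} {f : Ω → ℝ}
    (hf : Measurable f) (hg : Measure.map f P = gaussianReal 0 1) (n : ℕ) :
    ∫ ω, f ω ^ n ∂P = ∫ x, x ^ n ∂(gaussianReal 0 1) := by
  rw [← hg, integral_map hf.aemeasurable]
  exact (measurable_id.pow_const n).aestronglyMeasurable

lemma E4 {Ω : Type*} [MeasurableSpace Ω] (P : Measure Ω) [IsProbabilityMeasure P]
    (q : ℕ) (ζ : Fin (q + 1) → Ω → ℝ)
    (hmeas : ∀ j, Measurable (ζ j))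
    (hindep : iIndepFun ζ P)
    (hgauss : ∀ j, Measure.map (ζ j) P = gaussianReal 0 1)
    (a b c d : Fin (q + 1)) :
    Integrable (fun ω => ζ a ω * ζ b ω * ζ c ω * ζ d ω) P ∧
      ∫ ω, ζ a ω * ζ b ω * ζ c ω * ζ d ω ∂P
        = (if a = b then (1:ℝ) else 0) * (if c = d then 1 else 0)
          + (if a = c then (1:ℝ) else 0) * (if b = d then 1 else 0)
          + (if a = d then (1:ℝ) else 0) * (if b = c then 1 else 0) := by
  classical
  set m : Fin (q + 1) → ℕ := fun i => (if a = i then 1 else 0) + (if b = i then 1 else 0)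
      + (if c = i then 1 else 0) + (if d = i then 1 else 0) with hm
  have hrepr : (fun ω => ζ a ω * ζ b ω * ζ c ω * ζ d ω)
      = fun ω => ∏ i, ζ i ω ^ m i := by
    funext ω
    have h1 : ∀ e : Fin (q + 1), ζ e ω = ∏ i, ζ i ω ^ (if e = i then 1 else 0) := by
      intro e
      simp only [pow_ite, pow_one, pow_zero, Finset.prod_ite_eq, Finset.mem_univ, if_true]
    rw [h1 a, h1 b, h1 c, h1 d, ← Finset.prod_mul_distrib, ← Finset.prod_mul_distrib,
      ← Finset.prod_mul_distrib]
    refine Finset.prod_congr rfl fun i _ => ?_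
    simp only [hm, pow_add]
  obtain ⟨hI, hv⟩ := integral_prod_pow P q ζ hmeas hindep m
    (fun i => zeta_int (hmeas i) (hgauss i) (m i)) Finset.univ
  refine ⟨hrepr ▸ hI, ?_⟩
  rw [hrepr, hv, Finset.prod_congr rfl
    (fun i _ => zeta_mom (hmeas i) (hgauss i) (m i))]
  exact prod_g_eq (fun n => ∫ x, x ^ n ∂(gaussianReal 0 1)) gmom0 gmom1 gmom2 gmom3 gmom4 a b c d

lemma E2 {Ω : Type*} [MeasurableSpace Ω] (P : Measure Ω) [IsProbabilityMeasure P]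
    (q : ℕ) (ζ : Fin (q + 1) → Ω → ℝ)
    (hmeas : ∀ j, Measurable (ζ j))
    (hindep : iIndepFun ζ P)
    (hgauss : ∀ j, Measure.map (ζ j) P = gaussianReal 0 1)
    (a b : Fin (q + 1)) :
    Integrable (fun ω => ζ a ω * ζ b ω) P ∧
      ∫ ω, ζ a ω * ζ b ω ∂P = if a = b then (1:ℝ) else 0 := by
  classical
  set m : Fin (q + 1) → ℕ := fun i => (if a = i then 1 else 0) + (if b = i then 1 else 0)
    with hm
  have hrepr : (fun ω => ζ a ω * ζ b ω) = fun ω => ∏ i, ζ i ω ^ m i := by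
    funext ω
    have h1 : ∀ e : Fin (q + 1), ζ e ω = ∏ i, ζ i ω ^ (if e = i then 1 else 0) := by
      intro e
      simp only [pow_ite, pow_one, pow_zero, Finset.prod_ite_eq, Finset.mem_univ, if_true]
    rw [h1 a, h1 b, ← Finset.prod_mul_distrib]
    refine Finset.prod_congr rfl fun i _ => ?_
    simp only [hm, pow_add]
  obtain ⟨hI, hv⟩ := integral_prod_pow P q ζ hmeas hindep m
    (fun i => zeta_int (hmeas i) (hgauss i) (m i)) Finset.univ
  refine ⟨hrepr ▸ hI, ?_⟩
  rw [hrepr, hv, Finset.prod_congr rfl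
    (fun i _ => zeta_mom (hmeas i) (hgauss i) (m i))]
  exact prod_g_eq2 (fun n => ∫ x, x ^ n ∂(gaussianReal 0 1)) gmom0 gmom1 gmom2 a b

lemma delta_alg {ι : Type*} [DecidableEq ι] (p1 p2 r1 r2 : ι) :
    (((if p1 = p2 then (1:ℝ) else 0) * (if r1 = r2 then 1 else 0)
        + (if p1 = r1 then 1 else 0) * (if p2 = r2 then 1 else 0))
        + (if p1 = r2 then 1 else 0) * (if p2 = r1 then 1 else 0))
      - (if r1 = r2 then (1:ℝ) else 0) * (if p1 = p2 then 1 else 0)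
      - (if p1 = p2 then (1:ℝ) else 0) * (if r1 = r2 then 1 else 0)
      + (if p1 = p2 then (1:ℝ) else 0) * (if r1 = r2 then 1 else 0)
      = (if (p1, p2) = (r1, r2) then (1:ℝ) else 0)
        + (if (p1, p2) = (r2, r1) then 1 else 0) := by
  simp only [Prod.mk.injEq]
  by_cases h1 : p1 = p2 <;> by_cases h2 : r1 = r2 <;> by_cases h3 : p1 = r1 <;>
    by_cases h4 : p2 = r2 <;> by_cases h5 : p1 = r2 <;> by_cases h6 : p2 = r1 <;>
    simp_all <;> ring

lemma cov {Ω : Type*} [MeasurableSpace Ω] (P : Measure Ω) [IsProbabilityMeasure P]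
    (q : ℕ) (ζ : Fin (q + 1) → Ω → ℝ)
    (hmeas : ∀ j, Measurable (ζ j))
    (hindep : iIndepFun ζ P)
    (hgauss : ∀ j, Measure.map (ζ j) P = gaussianReal 0 1)
    (p r : Fin (q + 1) × Fin (q + 1)) :
    Integrable (fun ω => (ζ p.1 ω * ζ p.2 ω - if p.1 = p.2 then 1 else 0)
        * (ζ r.1 ω * ζ r.2 ω - if r.1 = r.2 then 1 else 0)) P ∧
      ∫ ω, (ζ p.1 ω * ζ p.2 ω - if p.1 = p.2 then 1 else 0)
          * (ζ r.1 ω * ζ r.2 ω - if r.1 = r.2 then 1 else 0) ∂P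
        = (if p = r then (1:ℝ) else 0) + (if p = (r.2, r.1) then 1 else 0) := by
  classical
  have expand : (fun ω => (ζ p.1 ω * ζ p.2 ω - if p.1 = p.2 then (1:ℝ) else 0)
        * (ζ r.1 ω * ζ r.2 ω - if r.1 = r.2 then 1 else 0))
      = fun ω => ζ p.1 ω * ζ p.2 ω * ζ r.1 ω * ζ r.2 ω
          - (if r.1 = r.2 then (1:ℝ) else 0) * (ζ p.1 ω * ζ p.2 ω)
          - (if p.1 = p.2 then (1:ℝ) else 0) * (ζ r.1 ω * ζ r.2 ω)
          + (if p.1 = p.2 then (1:ℝ) else 0) * (if r.1 = r.2 then 1 else 0) := by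
    funext ω; ring
  have h4 := E4 P q ζ hmeas hindep hgauss p.1 p.2 r.1 r.2
  have h2p := E2 P q ζ hmeas hindep hgauss p.1 p.2
  have h2r := E2 P q ζ hmeas hindep hgauss r.1 r.2
  have i3 : Integrable (fun ω => (if p.1 = p.2 then (1:ℝ) else 0) * (ζ r.1 ω * ζ r.2 ω)) P :=
    h2r.1.const_mul _
  have i4 : Integrable (fun ω => (if r.1 = r.2 then (1:ℝ) else 0) * (ζ p.1 ω * ζ p.2 ω)) P :=
    h2p.1.const_mul _
  have i1 : Integrable (fun ω => ζ p.1 ω * ζ p.2 ω * ζ r.1 ω * ζ r.2 ω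
      - (if r.1 = r.2 then (1:ℝ) else 0) * (ζ p.1 ω * ζ p.2 ω)) P := h4.1.sub i4
  have i2 : Integrable (fun ω => ζ p.1 ω * ζ p.2 ω * ζ r.1 ω * ζ r.2 ω
      - (if r.1 = r.2 then (1:ℝ) else 0) * (ζ p.1 ω * ζ p.2 ω)
      - (if p.1 = p.2 then (1:ℝ) else 0) * (ζ r.1 ω * ζ r.2 ω)) P := i1.sub i3
  constructor
  · rw [expand]; exact (i2.add (integrable_const _))
  · rw [expand, integral_add i2 (integrable_const _),
      integral_sub i1 i3,
      integral_sub h4.1 i4,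
      integral_const_mul, integral_const_mul, integral_const, h4.2, h2p.2, h2r.2]
    simp only [probReal_univ, one_smul]
    obtain ⟨p1, p2⟩ := p
    obtain ⟨r1, r2⟩ := r
    exact delta_alg p1 p2 r1 r2

/-- Second moment of the approximation of a double iterated Itô integral with equal
Wiener indices: for jointly independent standard Gaussians `ζ_0, …, ζ_q`, the variable
`X = Σ_{j₁,j₂} C j₂ j₁ (ζ_{j₁} ζ_{j₂} − 1_{j₁=j₂})` satisfies
`𝖤[X²] = Σ (C j₂ j₁)² + Σ C j₁ j₂ · C j₂ j₁`. -/
theorem second_moment_double_equal_indices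
    {Ω : Type*} [MeasurableSpace Ω] (P : Measure Ω) [IsProbabilityMeasure P]
    (q : ℕ) (ζ : Fin (q + 1) → Ω → ℝ)
    (hmeas : ∀ j, Measurable (ζ j))
    (hindep : iIndepFun ζ P)
    (hgauss : ∀ j, Measure.map (ζ j) P = gaussianReal 0 1)
    (C : Fin (q + 1) → Fin (q + 1) → ℝ) :
    ∫ ω, (∑ j₁ : Fin (q + 1), ∑ j₂ : Fin (q + 1),
        C j₂ j₁ * (ζ j₁ ω * ζ j₂ ω - if j₁ = j₂ then 1 else 0)) ^ 2 ∂P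
      = (∑ j₁ : Fin (q + 1), ∑ j₂ : Fin (q + 1), (C j₂ j₁) ^ 2)
        + ∑ j₁ : Fin (q + 1), ∑ j₂ : Fin (q + 1), C j₁ j₂ * C j₂ j₁ := by
  classical
  set c : Fin (q + 1) × Fin (q + 1) → ℝ := fun p => C p.2 p.1 with hc
  set Y : Fin (q + 1) × Fin (q + 1) → Ω → ℝ :=
    fun p ω => ζ p.1 ω * ζ p.2 ω - if p.1 = p.2 then 1 else 0 with hY
  have hrw : (fun ω => (∑ j₁ : Fin (q + 1), ∑ j₂ : Fin (q + 1),
        C j₂ j₁ * (ζ j₁ ω * ζ j₂ ω - if j₁ = j₂ then 1 else 0)) ^ 2)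
      = fun ω => ∑ p : Fin (q + 1) × Fin (q + 1), ∑ r : Fin (q + 1) × Fin (q + 1),
          (c p * c r) * (Y p ω * Y r ω) := by
    funext ω
    rw [show (∑ j₁ : Fin (q + 1), ∑ j₂ : Fin (q + 1),
        C j₂ j₁ * (ζ j₁ ω * ζ j₂ ω - if j₁ = j₂ then 1 else 0))
      = ∑ p : Fin (q + 1) × Fin (q + 1), c p * Y p ω from (Fintype.sum_prod_type (fun p : Fin (q + 1) × Fin (q + 1) => c p * Y p ω)).symm]
    rw [sq, Finset.sum_mul_sum]
    refine Finset.sum_congr rfl fun p _ => Finset.sum_congr rfl fun r _ => by ring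
  rw [hrw]
  rw [integral_finset_sum Finset.univ (fun p _ => integrable_finset_sum Finset.univ
    (fun r _ => ((cov P q ζ hmeas hindep hgauss p r).1.const_mul (c p * c r))))]
  have hval : ∀ p : Fin (q + 1) × Fin (q + 1),
      (∫ ω, ∑ r : Fin (q + 1) × Fin (q + 1), (c p * c r) * (Y p ω * Y r ω) ∂P)
        = c p * c p + c p * c (p.2, p.1) := by
    intro p
    rw [integral_finset_sum Finset.univ
      (fun r _ => ((cov P q ζ hmeas hindep hgauss p r).1.const_mul (c p * c r)))]
    have : ∀ r : Fin (q + 1) × Fin (q + 1),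
        (∫ ω, (c p * c r) * (Y p ω * Y r ω) ∂P)
          = (if r = p then c p * c r else 0) + (if r = (p.2, p.1) then c p * c r else 0) := by
      intro r
      rw [integral_const_mul, (cov P q ζ hmeas hindep hgauss p r).2]
      have h2 : (p = (r.2, r.1)) ↔ (r = (p.2, p.1)) := by
        obtain ⟨p1, p2⟩ := p; obtain ⟨r1, r2⟩ := r
        simp only [Prod.mk.injEq]
        constructor <;> rintro ⟨h, h'⟩ <;> exact ⟨h'.symm, h.symm⟩
      have h1 : (p = r) ↔ (r = p) := eq_comm
      rw [if_congr h1 rfl rfl, if_congr h2 rfl rfl]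
      split_ifs <;> ring
    rw [Finset.sum_congr rfl (fun r _ => this r), Finset.sum_add_distrib,
      Finset.sum_ite_eq' Finset.univ p (fun r => c p * c r),
      Finset.sum_ite_eq' Finset.univ (p.2, p.1) (fun r => c p * c r)]
    simp
  rw [Finset.sum_congr rfl (fun p _ => hval p), Finset.sum_add_distrib]
  congr 1
  · rw [Fintype.sum_prod_type]
    exact Finset.sum_congr rfl fun j₁ _ => Finset.sum_congr rfl fun j₂ _ => (sq (C j₂ j₁)).symm
  · rw [Fintype.sum_prod_type]
    exact Finset.sum_congr rfl fun j₁ _ => Finset.sum_congr rfl fun j₂ _ => mul_comm _ _
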